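/- The linear map M_E : ℝ^15 → ℝ^18 defined below has rank exactly 12. -/

import Mathlib

noncomputable section


/-- The coefficient matrix `M_E` of the type-E divergence system:
rows are `d29,…,d46`, columns are `c39,…,c53`. -/
def ME : Matrix (Fin 18) (Fin 15) ℝ :=
  !![0, 0, 0, 1, 0, 0, 0, 0, 0, 1, 0, 0, 0, 0, 0;
    0, 1, 0, 1, 0, 0, 0, 0, 0, 0, 0, 0, 1, 0, 0;
    0, 0, 0, 1, 0, 0, 0, 0, 1, 0, 0, 0, 0, 1, 0;
    0, 0, 0, 0, 1, 0, 0, 0, 0, 1, 0, 0, 0, 0, 0;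
    0, 0, 0, 0, 1, 1, 0, 0, 0, 0, 0, 0, 1, 0, 0;
    0, 0, 1, 0, 1, 0, 0, 0, 0, 0, 0, 0, 0, 1, 0;
    0, 0, 0, 0, 0, 1, 0, 0, 0, 0, 1, 0, 0, 0, 0;
    0, 0, 1, 0, 0, 1, 0, 0, 0, 0, 0, 0, 0, 0, 1;
    1, 0, 0, 0, 0, 0, 1, 0, 0, 0, 0, 0, 1, 0, 0;
    0, 0, 0, 0, 0, 0, 1, 0, 0, 0, 1, 0, 0, 0, 0;
    0, 0, 0, 0, 0, 0, 1, 1, 0, 0, 0, 0, 0, 0, 1;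
    1, 0, 0, 0, 0, 0, 0, 1, 0, 0, 0, 0, 0, 1, 0;
    0, 0, 0, 0, 0, 0, 0, 1, 0, 0, 0, 1, 0, 0, 0;
    0, 1, 0, 0, 0, 0, 0, 0, 1, 0, 0, 0, 0, 0, 1;
    0, 0, 0, 0, 0, 0, 0, 0, 1, 0, 0, 1, 0, 0, 0;
    1, 0, 0, 0, 0, 0, 0, 0, 0, 1, 0, 0, 0, 0, 0;
    0, 1, 0, 0, 0, 0, 0, 0, 0, 0, 1, 0, 0, 0, 0;
    0, 0, 1, 0, 0, 0, 0, 0, 0, 0, 0, 1, 0, 0, 0]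

/-- The linear map `M_E : ℝ^15 → ℝ^18` has rank exactly 12. -/


def MEz : Matrix (Fin 18) (Fin 15) ℤ :=
  !![0, 0, 0, 1, 0, 0, 0, 0, 0, 1, 0, 0, 0, 0, 0;
    0, 1, 0, 1, 0, 0, 0, 0, 0, 0, 0, 0, 1, 0, 0;
    0, 0, 0, 1, 0, 0, 0, 0, 1, 0, 0, 0, 0, 1, 0;
    0, 0, 0, 0, 1, 0, 0, 0, 0, 1, 0, 0, 0, 0, 0;
    0, 0, 0, 0, 1, 1, 0, 0, 0, 0, 0, 0, 1, 0, 0;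
    0, 0, 1, 0, 1, 0, 0, 0, 0, 0, 0, 0, 0, 1, 0;
    0, 0, 0, 0, 0, 1, 0, 0, 0, 0, 1, 0, 0, 0, 0;
    0, 0, 1, 0, 0, 1, 0, 0, 0, 0, 0, 0, 0, 0, 1;
    1, 0, 0, 0, 0, 0, 1, 0, 0, 0, 0, 0, 1, 0, 0;
    0, 0, 0, 0, 0, 0, 1, 0, 0, 0, 1, 0, 0, 0, 0;
    0, 0, 0, 0, 0, 0, 1, 1, 0, 0, 0, 0, 0, 0, 1;
    1, 0, 0, 0, 0, 0, 0, 1, 0, 0, 0, 0, 0, 1, 0;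
    0, 0, 0, 0, 0, 0, 0, 1, 0, 0, 0, 1, 0, 0, 0;
    0, 1, 0, 0, 0, 0, 0, 0, 1, 0, 0, 0, 0, 0, 1;
    0, 0, 0, 0, 0, 0, 0, 0, 1, 0, 0, 1, 0, 0, 0;
    1, 0, 0, 0, 0, 0, 0, 0, 0, 1, 0, 0, 0, 0, 0;
    0, 1, 0, 0, 0, 0, 0, 0, 0, 0, 1, 0, 0, 0, 0;
    0, 0, 1, 0, 0, 0, 0, 0, 0, 0, 0, 1, 0, 0, 0]

def MPz : Matrix (Fin 18) (Fin 12) ℤ :=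
  !![1, 0, 0, 0, 0, 0, 0, 0, 0, 0, 0, 0;
    0, 1, 0, 0, 0, 0, 0, 0, 0, 0, 0, 0;
    0, 0, 1, 0, 0, 0, 0, 0, 0, 0, 0, 0;
    0, 0, 0, 1, 0, 0, 0, 0, 0, 0, 0, 0;
    0, 0, 0, 0, 1, 0, 0, 0, 0, 0, 0, 0;
    0, 0, 0, 0, 0, 1, 0, 0, 0, 0, 0, 0;
    0, 0, 0, 0, 0, 0, 1, 0, 0, 0, 0, 0;
    0, 0, 0, 0, 0, 0, 0, 1, 0, 0, 0, 0;
    0, 0, 0, 0, 0, 0, 0, 0, 1, 0, 0, 0;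
    0, 0, 0, 0, 0, 0, 0, 0, 0, 1, 0, 0;
    0, 0, 0, 0, 0, 0, 0, 0, 0, 0, 1, 0;
    0, 0, 0, 0, -1, 1, 2, -1, 1, -2, 1, 0;
    0, 0, 0, 0, 0, 0, 0, 0, 0, 0, 0, 1;
    -2, 1, 1, 2, -1, -1, 0, 1, 0, 0, 0, 0;
    -1, 0, 1, 1, 0, -1, -1, 1, 0, 1, -1, 1;
    0, 0, 0, 1, -1, 0, 1, 0, 1, -1, 0, 0;
    -1, 1, 0, 1, -1, 0, 1, 0, 0, 0, 0, 0;
    0, 0, 0, 0, 0, 0, -1, 1, 0, 1, -1, 1]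

def MRz : Matrix (Fin 12) (Fin 15) ℤ :=
  !![0, 0, 0, 1, 0, 0, 0, 0, 0, 1, 0, 0, 0, 0, 0;
    0, 1, 0, 1, 0, 0, 0, 0, 0, 0, 0, 0, 1, 0, 0;
    0, 0, 0, 1, 0, 0, 0, 0, 1, 0, 0, 0, 0, 1, 0;
    0, 0, 0, 0, 1, 0, 0, 0, 0, 1, 0, 0, 0, 0, 0;
    0, 0, 0, 0, 1, 1, 0, 0, 0, 0, 0, 0, 1, 0, 0;
    0, 0, 1, 0, 1, 0, 0, 0, 0, 0, 0, 0, 0, 1, 0;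
    0, 0, 0, 0, 0, 1, 0, 0, 0, 0, 1, 0, 0, 0, 0;
    0, 0, 1, 0, 0, 1, 0, 0, 0, 0, 0, 0, 0, 0, 1;
    1, 0, 0, 0, 0, 0, 1, 0, 0, 0, 0, 0, 1, 0, 0;
    0, 0, 0, 0, 0, 0, 1, 0, 0, 0, 1, 0, 0, 0, 0;
    0, 0, 0, 0, 0, 0, 1, 1, 0, 0, 0, 0, 0, 0, 1;
    0, 0, 0, 0, 0, 0, 0, 1, 0, 0, 0, 1, 0, 0, 0]

def MPlz : Matrix (Fin 12) (Fin 18) ℤ :=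
  !![1, 0, 0, 0, 0, 0, 0, 0, 0, 0, 0, 0, 0, 0, 0, 0, 0, 0;
    0, 1, 0, 0, 0, 0, 0, 0, 0, 0, 0, 0, 0, 0, 0, 0, 0, 0;
    0, 0, 1, 0, 0, 0, 0, 0, 0, 0, 0, 0, 0, 0, 0, 0, 0, 0;
    0, 0, 0, 1, 0, 0, 0, 0, 0, 0, 0, 0, 0, 0, 0, 0, 0, 0;
    0, 0, 0, 0, 1, 0, 0, 0, 0, 0, 0, 0, 0, 0, 0, 0, 0, 0;
    0, 0, 0, 0, 0, 1, 0, 0, 0, 0, 0, 0, 0, 0, 0, 0, 0, 0;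
    0, 0, 0, 0, 0, 0, 1, 0, 0, 0, 0, 0, 0, 0, 0, 0, 0, 0;
    0, 0, 0, 0, 0, 0, 0, 1, 0, 0, 0, 0, 0, 0, 0, 0, 0, 0;
    0, 0, 0, 0, 0, 0, 0, 0, 1, 0, 0, 0, 0, 0, 0, 0, 0, 0;
    0, 0, 0, 0, 0, 0, 0, 0, 0, 1, 0, 0, 0, 0, 0, 0, 0, 0;
    0, 0, 0, 0, 0, 0, 0, 0, 0, 0, 1, 0, 0, 0, 0, 0, 0, 0;
    0, 0, 0, 0, 0, 0, 0, 0, 0, 0, 0, 0, 1, 0, 0, 0, 0, 0]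

def MRr2z : Matrix (Fin 15) (Fin 12) ℤ :=
  !![0, 0, 0, 0, -1, 1, 2, -1, 2, -2, 0, 0;
    -2, 2, 0, 2, -1, -1, 0, 1, 0, 0, 0, 0;
    0, 0, 0, 0, -1, 1, 0, 1, 0, 0, 0, 0;
    2, 0, 0, -2, 1, 1, 0, -1, 0, 0, 0, 0;
    0, 0, 0, 0, 1, 1, 0, -1, 0, 0, 0, 0;
    0, 0, 0, 0, 1, -1, 0, 1, 0, 0, 0, 0;
    0, 0, 0, 0, 1, -1, -2, 1, 0, 2, 0, 0;
    0, 0, 0, 0, -1, 1, 2, -1, 0, -2, 2, 0;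
    -2, 0, 2, 2, -1, -1, 0, 1, 0, 0, 0, 0;
    0, 0, 0, 2, -1, -1, 0, 1, 0, 0, 0, 0;
    0, 0, 0, 0, -1, 1, 2, -1, 0, 0, 0, 0;
    0, 0, 0, 0, 1, -1, -2, 1, 0, 2, -2, 2;
    0, 0, 0, 0, 0, 0, 0, 0, 0, 0, 0, 0;
    0, 0, 0, 0, 0, 0, 0, 0, 0, 0, 0, 0;
    0, 0, 0, 0, 0, 0, 0, 0, 0, 0, 0, 0]





set_option maxRecDepth 10000 in
private lemma zfact : MEz = MPz * MRz := by decide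

set_option maxRecDepth 10000 in
private lemma zleft : MPlz * MPz = 1 := by decide

set_option maxRecDepth 10000 in
private lemma zright : MRz * MRr2z = Matrix.diagonal (fun _ => (2:ℤ)) := by decide

private def cz : ℤ →+* ℝ := Int.castRingHom ℝ

private lemma map_vecEmpty (f : ℤ → ℝ) {n : ℕ} (A : Matrix (Fin 0) (Fin n) ℤ) :
    A.map f = Matrix.of ![] := by
  ext i j; exact i.elim0

private lemma map_vecCons (f : ℤ → ℝ) {m n : ℕ} (r : Fin n → ℤ)
    (A : Fin m → Fin n → ℤ) :
    (Matrix.of (Matrix.vecCons r A)).map f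
      = Matrix.of (Matrix.vecCons (f ∘ r) ((Matrix.of A).map f)) := by
  ext i j
  refine Fin.cases ?_ (fun i => ?_) i <;> simp [Matrix.map_apply] <;> rfl

private lemma comp_vecEmpty (f : ℤ → ℝ) : f ∘ ![] = ![] := by
  ext i; exact i.elim0

private lemma comp_vecCons (f : ℤ → ℝ) {n : ℕ} (x : ℤ) (u : Fin n → ℤ) :
    f ∘ Matrix.vecCons x u = Matrix.vecCons (f x) (f ∘ u) := by
  ext i
  refine Fin.cases ?_ (fun i => ?_) i <;> simp

set_option maxHeartbeats 1000000 in
private lemma bridge : ME = MEz.map cz := by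
  rw [ME, MEz]
  simp only [map_vecCons, map_vecEmpty, comp_vecCons, comp_vecEmpty, cz,
    Int.coe_castRingHom, Int.cast_zero, Int.cast_one]
  rfl

private lemma hfact : ME = MPz.map cz * MRz.map cz := by
  rw [bridge, zfact, Matrix.map_mul]

private lemma hleft : MPlz.map cz * MPz.map cz = 1 := by
  rw [← Matrix.map_mul, zleft, Matrix.map_one cz cz.map_zero cz.map_one]

private lemma hright :
    MRz.map cz * MRr2z.map cz = Matrix.diagonal (fun _ => (2:ℝ)) := by
  rw [← Matrix.map_mul, zright, Matrix.diagonal_map cz.map_zero]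
  congr 1

/-- The linear map `M_E : ℝ^15 → ℝ^18` has rank exactly 12. -/
theorem ME_rank_eq_12 : ME.rank = 12 := by
  have hD : Matrix.diagonal (fun _ : Fin 12 => (2:ℝ)) *
      Matrix.diagonal (fun _ : Fin 12 => (2:ℝ)⁻¹) = (1 : Matrix (Fin 12) (Fin 12) ℝ) := by
    rw [Matrix.diagonal_mul_diagonal, ← Matrix.diagonal_one]
    funext
    norm_num
  have key : MPlz.map cz * ME *
      (MRr2z.map cz * Matrix.diagonal (fun _ : Fin 12 => (2:ℝ)⁻¹)) =
      (1 : Matrix (Fin 12) (Fin 12) ℝ) := by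
    rw [hfact, ← Matrix.mul_assoc (MPlz.map cz) (MPz.map cz) (MRz.map cz), hleft,
      Matrix.one_mul, ← Matrix.mul_assoc, hright, hD]
  apply le_antisymm
  · calc ME.rank = (MPz.map cz * MRz.map cz).rank := by rw [← hfact]
      _ ≤ (MRz.map cz).rank := Matrix.rank_mul_le_right _ _
      _ ≤ Fintype.card (Fin 12) := Matrix.rank_le_card_height _
      _ = 12 := by simp
  · calc (12 : ℕ) = (1 : Matrix (Fin 12) (Fin 12) ℝ).rank := by
          rw [Matrix.rank_one]; simp
      _ = (MPlz.map cz * ME *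
            (MRr2z.map cz * Matrix.diagonal (fun _ : Fin 12 => (2:ℝ)⁻¹))).rank := by
          rw [key]
      _ ≤ (MPlz.map cz * ME).rank := Matrix.rank_mul_le_left _ _
      _ ≤ ME.rank := Matrix.rank_mul_le_right _ _
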